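/- The generalized natural growth operator N_t satisfies the coproduct formula Δ(N_t(s)) = (N_t ⊗ id)(Δ s) + Σ_{c admissible cut of t} (m_{P_c(t)} ⊗ N_{R_c(t)})(Δ s), where m_{P_c(t)} denotes multiplication by the pruned forest P_c(t). -/

import Mathlib

open TensorProduct

noncomputable section

/-- The Hopf algebra of rooted trees as a commutative algebra: the free commutative
`ℚ`-algebra on rooted trees, i.e. the monoid algebra of the commutative monoid of
forests (multisets of trees). -/
abbrev Hrt (T : Type) : Type := AddMonoidAlgebra ℚ (Multiset T)

/-- The basis element of `Hrt T` corresponding to a forest `F`. -/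
def frt {T : Type} (F : Multiset T) : Hrt T := AddMonoidAlgebra.single F 1

/-- The basis element of `Hrt T` corresponding to a single rooted tree `t`. -/
def tre {T : Type} (t : T) : Hrt T := frt {t}
variable {T : Type}
lemma frt_mul (F G : Multiset T) : frt F * frt G = frt (F + G) := by
  simp [frt, AddMonoidAlgebra.single_mul_single]
lemma frt_zero : (frt (0 : Multiset T)) = 1 := by
  simp [frt, AddMonoidAlgebra.one_def]
lemma frt_cons (t : T) (F : Multiset T) : tre t * frt F = frt (t ::ₘ F) := by
  rw [tre, frt_mul]; rfl
lemma single_eq_smul (F : Multiset T) (r : ℚ) :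
    (AddMonoidAlgebra.single F r : Hrt T) = r • frt F := by
  simp [frt, AddMonoidAlgebra.smul_single']

/-- extend a derivation property from basis elements to all of `Hrt`. -/
lemma der_ext (f : Hrt T →ₗ[ℚ] Hrt T)
    (h : ∀ F G : Multiset T, f (frt F * frt G) = f (frt F) * frt G + frt F * f (frt G)) :
    ∀ a b : Hrt T, f (a * b) = f a * b + a * f b := by
  intro a b
  induction a using AddMonoidAlgebra.induction_linear with
  | zero => simp
  | add x y hx hy => rw [add_mul, LinearMap.map_add, LinearMap.map_add, hx, hy, add_mul]; ring
  | single F r =>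
    induction b using AddMonoidAlgebra.induction_linear with
    | zero => simp
    | add x y hx hy => rw [mul_add, LinearMap.map_add, LinearMap.map_add, hx, hy, mul_add]; ring
    | single G u =>
      rw [show (AddMonoidAlgebra.single F r : Hrt T) = r • frt F from single_eq_smul F r,
        show (AddMonoidAlgebra.single G u : Hrt T) = u • frt G from single_eq_smul G u]
      simp only [map_smul, smul_mul_assoc, mul_smul_comm, smul_smul, smul_add, h F G,
        mul_comm u r]

/-- Y is a derivation. -/
lemma Y_der (vert : T → ℕ) (Y : Hrt T →ₗ[ℚ] Hrt T)
    (hY : ∀ F : Multiset T, Y (frt F) = ((F.map vert).sum : ℚ) • frt F) :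
    ∀ a b : Hrt T, Y (a * b) = Y a * b + a * Y b := by
  apply der_ext
  intro F G
  rw [frt_mul, hY, hY, hY, smul_mul_assoc, mul_smul_comm, frt_mul, ← add_smul]
  push_cast [Multiset.map_add, Multiset.sum_add]
  ring_nf

/-- `f ⊗ id` is a derivation when `f` is. -/
lemma rTensor_der (f : Hrt T →ₗ[ℚ] Hrt T)
    (hf : ∀ a b : Hrt T, f (a * b) = f a * b + a * f b) :
    ∀ x y : Hrt T ⊗[ℚ] Hrt T,
      LinearMap.rTensor (Hrt T) f (x * y)
        = LinearMap.rTensor (Hrt T) f x * y + x * LinearMap.rTensor (Hrt T) f y := by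
  intro x y
  induction x using TensorProduct.induction_on with
  | zero => simp only [zero_mul, LinearMap.map_zero, zero_add]
  | add x1 x2 h1 h2 => rw [add_mul, LinearMap.map_add, LinearMap.map_add, h1, h2, add_mul]; ring
  | tmul a b =>
    induction y using TensorProduct.induction_on with
    | zero => simp only [mul_zero, LinearMap.map_zero, add_zero]
    | add y1 y2 g1 g2 => rw [mul_add, LinearMap.map_add, LinearMap.map_add, g1, g2, mul_add]; ring
    | tmul a' b' =>
      simp [Algebra.TensorProduct.tmul_mul_tmul, hf a a', add_tmul]

/-- `(P * ·) ⊗ g` is a derivation when `g` is (by commutativity). -/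
lemma mapMul_der (P : Hrt T) (g : Hrt T →ₗ[ℚ] Hrt T)
    (hg : ∀ a b : Hrt T, g (a * b) = g a * b + a * g b) :
    ∀ x y : Hrt T ⊗[ℚ] Hrt T,
      TensorProduct.map (LinearMap.mulLeft ℚ P) g (x * y)
        = TensorProduct.map (LinearMap.mulLeft ℚ P) g x * y
          + x * TensorProduct.map (LinearMap.mulLeft ℚ P) g y := by
  intro x y
  induction x using TensorProduct.induction_on with
  | zero => simp only [zero_mul, LinearMap.map_zero, zero_add]
  | add x1 x2 h1 h2 => rw [add_mul, LinearMap.map_add, LinearMap.map_add, h1, h2, add_mul]; ring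
  | tmul a b =>
    induction y using TensorProduct.induction_on with
    | zero => simp only [mul_zero, LinearMap.map_zero, add_zero]
    | add y1 y2 g1 g2 => rw [mul_add, LinearMap.map_add, LinearMap.map_add, g1, g2, mul_add]; ring
    | tmul a' b' =>
      have e1 : P * (a * a') = P * a * a' := by ring
      have e2 : a * (P * a') = P * a * a' := by ring
      simp only [Algebra.TensorProduct.tmul_mul_tmul, TensorProduct.map_tmul,
        LinearMap.mulLeft_apply, hg b b', tmul_add]
      rw [e1, e2]

/-- `Ng` on a forest, via the derivation property. -/
lemma Ng_frt [DecidableEq T] (Ng : T → Hrt T →ₗ[ℚ] Hrt T)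
    (hNder : ∀ (t : T) (a b : Hrt T), Ng t (a * b) = Ng t a * b + a * Ng t b)
    (r : T) (G : Multiset T) :
    Ng r (frt G) = (G.map (fun u => frt (G.erase u) * Ng r (tre u))).sum := by
  induction G using Multiset.induction_on with
  | empty =>
    have h := hNder r 1 1
    rw [mul_one, mul_one, one_mul] at h
    have h0 : Ng r 1 = 0 := left_eq_add.mp h
    simp [frt_zero, h0]
  | cons u G' ih =>
    rw [← frt_cons, hNder r (tre u) (frt G')]
    rw [Multiset.map_cons, Multiset.sum_cons, Multiset.erase_cons_head]
    have hmap : (G'.map fun v => frt ((u ::ₘ G').erase v) * Ng r (tre v))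
        = G'.map fun v => tre u * (frt (G'.erase v) * Ng r (tre v)) := by
      apply Multiset.map_congr rfl
      intro v hv
      have : (u ::ₘ G').erase v = u ::ₘ G'.erase v := by
        rw [← Multiset.cons_inj_right (a := v)]
        rw [Multiset.cons_erase (Multiset.mem_cons_of_mem hv), Multiset.cons_swap,
          Multiset.cons_erase hv]
      rw [this, ← frt_cons, mul_assoc]
    rw [hmap, ih, mul_comm (Ng r (tre u)) (frt G'), ← Multiset.sum_map_mul_left]

lemma Ng_one [DecidableEq T] (Ng : T → Hrt T →ₗ[ℚ] Hrt T)
    (hNder : ∀ (t : T) (a b : Hrt T), Ng t (a * b) = Ng t a * b + a * Ng t b)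
    (r : T) : Ng r 1 = 0 := by
  have h := hNder r 1 1
  rw [mul_one, mul_one, one_mul] at h
  exact left_eq_add.mp h

/-- `N_r ∘ B₊ = B₊ ∘ (m_r + N_r)`. -/
lemma Ng_Bp [DecidableEq T] (B : Multiset T → T)
    (Bp : Hrt T →ₗ[ℚ] Hrt T) (hBp : ∀ F : Multiset T, Bp (frt F) = tre (B F))
    (Ng : T → Hrt T →ₗ[ℚ] Hrt T)
    (hNder : ∀ (t : T) (a b : Hrt T), Ng t (a * b) = Ng t a * b + a * Ng t b)
    (hNtree : ∀ (t : T) (F : Multiset T),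
      Ng t (tre (B F)) = tre (B (t ::ₘ F))
        + (F.map (fun s => Bp (frt (F.erase s) * Ng t (tre s)))).sum)
    (r : T) : ∀ b : Hrt T, Ng r (Bp b) = Bp (tre r * b) + Bp (Ng r b) := by
  intro b
  induction b using AddMonoidAlgebra.induction_linear with
  | zero => simp [Ng_one Ng hNder]
  | add x y hx hy => simp only [LinearMap.map_add, mul_add, hx, hy]; ring
  | single G u =>
    rw [show (AddMonoidAlgebra.single G u : Hrt T) = u • frt G from single_eq_smul G u]
    simp only [LinearMap.map_smul, mul_smul_comm]
    rw [hBp G, hNtree r G, Ng_frt Ng hNder r G, frt_cons, hBp,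
      map_multiset_sum Bp, Multiset.map_map, smul_add]
    simp [Function.comp]

lemma Y_Bp [DecidableEq T] (B : Multiset T → T) (vert : T → ℕ)
    (hvert : ∀ F : Multiset T, vert (B F) = 1 + (F.map vert).sum)
    (Bp : Hrt T →ₗ[ℚ] Hrt T) (hBp : ∀ F : Multiset T, Bp (frt F) = tre (B F))
    (Y : Hrt T →ₗ[ℚ] Hrt T)
    (hY : ∀ F : Multiset T, Y (frt F) = ((F.map vert).sum : ℚ) • frt F) :
    ∀ b : Hrt T, Y (Bp b) = Bp b + Bp (Y b) := by
  intro b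
  induction b using AddMonoidAlgebra.induction_linear with
  | zero => simp
  | add x y hx hy => simp only [LinearMap.map_add, hx, hy]; ring
  | single G u =>
    rw [show (AddMonoidAlgebra.single G u : Hrt T) = u • frt G from single_eq_smul G u]
    simp only [LinearMap.map_smul]
    rw [hBp G, hY G, show tre (B G) = frt {B G} from rfl, hY {B G}, LinearMap.map_smul, hBp G]
    rw [Multiset.map_singleton, Multiset.sum_singleton, hvert G]
    push_cast
    rw [add_smul, one_smul, smul_add]
    simp [tre]

lemma Delta_Bp (B : Multiset T → T)
    (Bp : Hrt T →ₗ[ℚ] Hrt T) (hBp : ∀ F : Multiset T, Bp (frt F) = tre (B F))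
    (Δ : Hrt T →ₐ[ℚ] Hrt T ⊗[ℚ] Hrt T)
    (hΔ : ∀ F : Multiset T,
      Δ (tre (B F)) = tre (B F) ⊗ₜ[ℚ] 1 + (LinearMap.lTensor (Hrt T) Bp) (Δ (frt F))) :
    ∀ x : Hrt T, Δ (Bp x) = Bp x ⊗ₜ[ℚ] 1 + LinearMap.lTensor (Hrt T) Bp (Δ x) := by
  intro x
  induction x using AddMonoidAlgebra.induction_linear with
  | zero => simp
  | add x y hx hy =>
    simp only [LinearMap.map_add, map_add, hx, hy, add_tmul]; ring
  | single G u =>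
    rw [show (AddMonoidAlgebra.single G u : Hrt T) = u • frt G from single_eq_smul G u]
    simp only [LinearMap.map_smul, map_smul, smul_add, smul_tmul']
    rw [hBp G, hΔ G, smul_add, smul_tmul']

lemma frt_prod (F : Multiset T) : frt F = (F.map tre).prod := by
  induction F using Multiset.induction_on with
  | empty => simp [frt_zero]
  | cons u F' ih => rw [Multiset.map_cons, Multiset.prod_cons, ← ih, frt_cons]

/-- The operator `N_t ⊗ id + Σ_c m_{P_c} ⊗ N_{R_c}` on `Hrt ⊗ Hrt`. -/
def Dop (Ng : T → Hrt T →ₗ[ℚ] Hrt T) (Y : Hrt T →ₗ[ℚ] Hrt T)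
    (t : T) (C : Type) [Fintype C] (Pc : C → Multiset T) (Rc : C → Option T) :
    Hrt T ⊗[ℚ] Hrt T →ₗ[ℚ] Hrt T ⊗[ℚ] Hrt T :=
  LinearMap.rTensor (Hrt T) (Ng t)
    + ∑ c : C, TensorProduct.map (LinearMap.mulLeft ℚ (frt (Pc c))) ((Rc c).elim Y Ng)

lemma Dop_apply (Ng : T → Hrt T →ₗ[ℚ] Hrt T) (Y : Hrt T →ₗ[ℚ] Hrt T)
    (t : T) (C : Type) [Fintype C] (Pc : C → Multiset T) (Rc : C → Option T)
    (w : Hrt T ⊗[ℚ] Hrt T) :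
    Dop Ng Y t C Pc Rc w
      = LinearMap.rTensor (Hrt T) (Ng t) w
        + ∑ c : C, TensorProduct.map (LinearMap.mulLeft ℚ (frt (Pc c))) ((Rc c).elim Y Ng) w := by
  simp [Dop, LinearMap.add_apply, LinearMap.sum_apply]

section Main
variable [DecidableEq T] (vert : T → ℕ)
  (Ng : T → Hrt T →ₗ[ℚ] Hrt T)
  (hNder : ∀ (t : T) (a b : Hrt T), Ng t (a * b) = Ng t a * b + a * Ng t b)
  (Y : Hrt T →ₗ[ℚ] Hrt T)
  (hY : ∀ F : Multiset T, Y (frt F) = ((F.map vert).sum : ℚ) • frt F)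
  (t : T) (C : Type) [Fintype C] (Pc : C → Multiset T) (Rc : C → Option T)

include hNder hY

lemma elim_der : ∀ (c : C) (a b : Hrt T),
    ((Rc c).elim Y Ng) (a * b) = ((Rc c).elim Y Ng) a * b + a * ((Rc c).elim Y Ng) b := by
  intro c a b
  cases h : Rc c with
  | none => simpa using Y_der vert Y hY a b
  | some r => simpa using hNder r a b

lemma elim_one : ∀ c : C, ((Rc c).elim Y Ng) 1 = 0 := by
  intro c
  cases h : Rc c with
  | none => simpa [frt_zero] using hY 0
  | some r => simpa using Ng_one Ng hNder r

lemma Dop_der : ∀ x y : Hrt T ⊗[ℚ] Hrt T,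
    Dop Ng Y t C Pc Rc (x * y) = Dop Ng Y t C Pc Rc x * y + x * Dop Ng Y t C Pc Rc y := by
  intro x y
  simp only [Dop_apply]
  rw [rTensor_der (Ng t) (hNder t) x y]
  rw [Finset.sum_congr rfl (fun c _ =>
    mapMul_der (frt (Pc c)) ((Rc c).elim Y Ng) (elim_der vert Ng hNder Y hY C Rc c) x y)]
  rw [Finset.sum_add_distrib, add_mul, mul_add, ← Finset.sum_mul, ← Finset.mul_sum]
  ring

end Main

section Main2
set_option linter.unusedSectionVars false
variable [DecidableEq T] (B : Multiset T → T) (vert : T → ℕ)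
  (hvert : ∀ F : Multiset T, vert (B F) = 1 + (F.map vert).sum)
  (Bp : Hrt T →ₗ[ℚ] Hrt T) (hBp : ∀ F : Multiset T, Bp (frt F) = tre (B F))
  (Ng : T → Hrt T →ₗ[ℚ] Hrt T)
  (hNder : ∀ (t : T) (a b : Hrt T), Ng t (a * b) = Ng t a * b + a * Ng t b)
  (hNtree : ∀ (t : T) (F : Multiset T),
      Ng t (tre (B F)) = tre (B (t ::ₘ F))
        + (F.map (fun s => Bp (frt (F.erase s) * Ng t (tre s)))).sum)
  (Y : Hrt T →ₗ[ℚ] Hrt T)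
  (hY : ∀ F : Multiset T, Y (frt F) = ((F.map vert).sum : ℚ) • frt F)
  (t : T) (C : Type) [Fintype C] (Pc : C → Multiset T) (Rc : C → Option T)

include hvert hBp hNder hNtree hY

lemma elim_Bp : ∀ (c : C) (b : Hrt T),
    ((Rc c).elim Y Ng) (Bp b)
      = Bp ((Rc c).elim 1 tre * b) + Bp (((Rc c).elim Y Ng) b) := by
  intro c b
  cases h : Rc c with
  | none => simpa [one_mul] using Y_Bp B vert hvert Bp hBp Y hY b
  | some r => simpa using Ng_Bp B Bp hBp Ng hNder hNtree r b

lemma Dop_comm : ∀ w : Hrt T ⊗[ℚ] Hrt T,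
    Dop Ng Y t C Pc Rc (LinearMap.lTensor (Hrt T) Bp w)
      = LinearMap.lTensor (Hrt T) Bp
          ((∑ c : C, frt (Pc c) ⊗ₜ[ℚ] ((Rc c).elim 1 tre)) * w + Dop Ng Y t C Pc Rc w) := by
  intro w
  induction w using TensorProduct.induction_on with
  | zero => rw [LinearMap.map_zero, LinearMap.map_zero, mul_zero, zero_add,
      LinearMap.map_zero]
  | add w1 w2 h1 h2 =>
    simp only [LinearMap.map_add, mul_add, h1, h2]
    ring
  | tmul a b =>
    have hE : (∑ c : C, frt (Pc c) ⊗ₜ[ℚ] ((Rc c).elim 1 tre)) * (a ⊗ₜ[ℚ] b)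
        = ∑ c : C, (frt (Pc c) * a) ⊗ₜ[ℚ] (((Rc c).elim 1 tre : Hrt T) * b) := by
      rw [Finset.sum_mul]
      exact Finset.sum_congr rfl fun c _ => Algebra.TensorProduct.tmul_mul_tmul _ _ _ _
    rw [LinearMap.lTensor_tmul, Dop_apply, Dop_apply, LinearMap.rTensor_tmul,
      LinearMap.rTensor_tmul, hE]
    simp only [TensorProduct.map_tmul, LinearMap.mulLeft_apply]
    rw [LinearMap.map_add, _root_.map_sum, LinearMap.map_add, _root_.map_sum]
    simp only [LinearMap.lTensor_tmul]
    rw [Finset.sum_congr rfl (fun c _ => by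
      rw [elim_Bp B vert hvert Bp hBp Ng hNder hNtree Y hY C Rc c b, tmul_add])]
    rw [Finset.sum_add_distrib]
    abel

end Main2



/-- **Coproduct of the generalized natural growth operator.**
`T` is the type of rooted trees (with grafting bijection `B = B₊`, induction principle
and vertex count `vert`).  `Δ` is the admissible-cut coproduct, `Ng t = N_t` the
generalized natural growth operator, and `Y` the grading operator (`= N_1`).  The
admissible cuts of the tree `t` are presented by a finite type `C` with pruned forest
`Pc c` and root part `Rc c` (a tree, or `none` for the full cut where `R_c(t) = 1`),
so that `Δ t = Σ_c P_c(t) ⊗ R_c(t)`.  Then for trees `t, s`: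
`Δ(N_t(s)) = (N_t ⊗ id)(Δ s) + Σ_{c admissible cut of t} (m_{P_c(t)} ⊗ N_{R_c(t)})(Δ s)`,
where `m_{P_c(t)}` is multiplication by the forest `P_c(t)` and `N_{R_c(t)} = Y` when
`R_c(t) = 1`. -/
theorem coproduct_naturalGrowth
    (T : Type) [DecidableEq T] (B : Multiset T → T) (hB : Function.Bijective B)
    (hind : ∀ P : T → Prop,
      (∀ F : Multiset T, (∀ s ∈ F, P s) → P (B F)) → ∀ t, P t)
    (vert : T → ℕ) (hvert : ∀ F : Multiset T, vert (B F) = 1 + (F.map vert).sum)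
    (Bp : Hrt T →ₗ[ℚ] Hrt T) (hBp : ∀ F : Multiset T, Bp (frt F) = tre (B F))
    (Δ : Hrt T →ₐ[ℚ] Hrt T ⊗[ℚ] Hrt T)
    (hΔ : ∀ F : Multiset T,
      Δ (tre (B F)) = tre (B F) ⊗ₜ[ℚ] 1 + (LinearMap.lTensor (Hrt T) Bp) (Δ (frt F)))
    (Ng : T → Hrt T →ₗ[ℚ] Hrt T)
    (hNder : ∀ (t : T) (a b : Hrt T), Ng t (a * b) = Ng t a * b + a * Ng t b)
    (hNtree : ∀ (t : T) (F : Multiset T),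
      Ng t (tre (B F)) = tre (B (t ::ₘ F))
        + (F.map (fun s => Bp (frt (F.erase s) * Ng t (tre s)))).sum)
    (Y : Hrt T →ₗ[ℚ] Hrt T)
    (hY : ∀ F : Multiset T, Y (frt F) = ((F.map vert).sum : ℚ) • frt F)
    (t s : T)
    (C : Type) [Fintype C] (Pc : C → Multiset T) (Rc : C → Option T)
    (hcut : Δ (tre t) = ∑ c : C, frt (Pc c) ⊗ₜ[ℚ] ((Rc c).elim 1 tre)) :
    Δ (Ng t (tre s)) =
      (LinearMap.rTensor (Hrt T) (Ng t)) (Δ (tre s))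
        + ∑ c : C,
            (TensorProduct.map (LinearMap.mulLeft ℚ (frt (Pc c))) ((Rc c).elim Y Ng))
              (Δ (tre s)) := by
  rw [← Dop_apply Ng Y t C Pc Rc]
  -- the property, as a predicate on all of `Hrt`
  set Q : Hrt T → Prop := fun x => Δ (Ng t x) = Dop Ng Y t C Pc Rc (Δ x) with hQ
  -- Q holds at 1
  have hQ1 : Q 1 := by
    rw [hQ]
    simp only [Ng_one Ng hNder t, map_zero, map_one, Algebra.TensorProduct.one_def, Dop_apply,
      LinearMap.rTensor_tmul, TensorProduct.map_tmul, LinearMap.mulLeft_apply,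
      Ng_one Ng hNder, elim_one vert Ng hNder Y hY C Rc, mul_one]
    simp [zero_tmul, tmul_zero]
  -- Q is multiplicative
  have hQmul : ∀ a b : Hrt T, Q a → Q b → Q (a * b) := by
    intro a b ha hb
    show Δ (Ng t (a * b)) = Dop Ng Y t C Pc Rc (Δ (a * b))
    rw [hNder t a b, map_add, map_mul, map_mul, ha, hb, map_mul,
      Dop_der vert Ng hNder Y hY t C Pc Rc (Δ a) (Δ b)]
  -- hence Q holds on forests whose trees all satisfy it
  have hQfrt : ∀ F : Multiset T, (∀ u ∈ F, Q (tre u)) → Q (frt F) := by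
    intro F
    induction F using Multiset.induction_on with
    | empty => intro _; rw [frt_zero]; exact hQ1
    | cons u F' ih =>
      intro h
      rw [← frt_cons]
      exact hQmul _ _ (h u (Multiset.mem_cons_self u F'))
        (ih fun v hv => h v (Multiset.mem_cons_of_mem hv))
  -- main induction on the tree `s`
  refine hind (fun s => Q (tre s)) ?_ s
  intro F IH
  have QF := hQfrt F IH
  show Δ (Ng t (tre (B F))) = Dop Ng Y t C Pc Rc (Δ (tre (B F)))
  -- `N_t(B₊ F) = B₊ (t · F + N_t F)`
  have hX : Ng t (tre (B F)) = Bp (tre t * frt F + Ng t (frt F)) := by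
    rw [hNtree t F, LinearMap.map_add, frt_cons, hBp, Ng_frt Ng hNder t F,
      map_multiset_sum Bp, Multiset.map_map]
    simp [Function.comp]
  have QF' : Δ (Ng t (frt F)) = Dop Ng Y t C Pc Rc (Δ (frt F)) := QF
  have hXΔ : Δ (tre t * frt F + Ng t (frt F))
      = (∑ c : C, frt (Pc c) ⊗ₜ[ℚ] ((Rc c).elim 1 tre)) * Δ (frt F)
        + Dop Ng Y t C Pc Rc (Δ (frt F)) := by
    rw [map_add, map_mul, hcut, QF']
  have hD1 : Dop Ng Y t C Pc Rc (tre (B F) ⊗ₜ[ℚ] 1)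
      = Ng t (tre (B F)) ⊗ₜ[ℚ] (1 : Hrt T) := by
    rw [Dop_apply]
    simp only [LinearMap.rTensor_tmul, TensorProduct.map_tmul, LinearMap.mulLeft_apply,
      elim_one vert Ng hNder Y hY C Rc, tmul_zero, Finset.sum_const_zero, add_zero]
  calc Δ (Ng t (tre (B F)))
      = Δ (Bp (tre t * frt F + Ng t (frt F))) := by rw [hX]
    _ = Bp (tre t * frt F + Ng t (frt F)) ⊗ₜ[ℚ] 1
        + LinearMap.lTensor (Hrt T) Bp (Δ (tre t * frt F + Ng t (frt F))) :=
      Delta_Bp B Bp hBp Δ hΔ _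
    _ = Ng t (tre (B F)) ⊗ₜ[ℚ] 1
        + Dop Ng Y t C Pc Rc (LinearMap.lTensor (Hrt T) Bp (Δ (frt F))) := by
      rw [hXΔ, ← Dop_comm B vert hvert Bp hBp Ng hNder hNtree Y hY t C Pc Rc (Δ (frt F)), hX]
    _ = Dop Ng Y t C Pc Rc (tre (B F) ⊗ₜ[ℚ] 1)
        + Dop Ng Y t C Pc Rc (LinearMap.lTensor (Hrt T) Bp (Δ (frt F))) := by rw [hD1]
    _ = Dop Ng Y t C Pc Rc (Δ (tre (B F))) := by rw [hΔ F, LinearMap.map_add]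

end
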